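/- Let D_∞(ρ‖σ) denote the max-relative entropy and suppose D_∞(ρ‖σ) ≤ ε and D_∞(σ‖ρ) ≤ ε. Then the convexity bound E_γ(ρ‖σ) ≤ ((e^ε - γ)/(e^ε - 1))·E₁(ρ‖σ) holds for all γ ∈ [1, e^ε], and consequently H_{1/2}(ρ‖σ) = (1/2)∫₁^∞ γ^{-3/2}(E_γ(ρ‖σ) + E_γ(σ‖ρ)) dγ ≤ 2·((e^{ε/2}-1)²/(e^ε-1))·E₁(ρ‖σ). -/

import Mathlib

open Matrix BigOperators
open scoped ComplexOrder

open scoped Classical in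
/-- `Tr[X₊]`: sum of the nonnegative eigenvalues of a Hermitian matrix (0 otherwise). -/
noncomputable def trPos {n : Type*} [Fintype n] [DecidableEq n] (X : Matrix n n ℂ) : ℝ :=
  if h : X.IsHermitian then ∑ i, max (h.eigenvalues i) 0 else 0

/-- Hockey-stick divergence `E_γ(ρ‖σ) = Tr(ρ - γσ)₊`. -/
noncomputable def Egamma {n : Type*} [Fintype n] [DecidableEq n]
    (γ : ℝ) (ρ σ : Matrix n n ℂ) : ℝ :=
  trPos (ρ - (γ : ℂ) • σ)

/-- Trace norm `‖A‖₁ = Tr√(AᴴA)`: sum of singular values. -/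
noncomputable def traceNorm {n : Type*} [Fintype n] [DecidableEq n] (A : Matrix n n ℂ) : ℝ :=
  ∑ i, Real.sqrt (((Matrix.posSemidef_conjTranspose_mul_self A).1).eigenvalues i)

/-- Real power `ρ^α` of a Hermitian matrix via its spectral decomposition. -/
noncomputable def mpow {n : Type*} [Fintype n] [DecidableEq n]
    {ρ : Matrix n n ℂ} (hρ : ρ.IsHermitian) (α : ℝ) : Matrix n n ℂ :=
  (hρ.eigenvectorUnitary : Matrix n n ℂ) *
    Matrix.diagonal (fun i => ((hρ.eigenvalues i ^ α : ℝ) : ℂ)) *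
    (star hρ.eigenvectorUnitary : Matrix n n ℂ)

/-- Fidelity `F(ρ,σ) = ‖√ρ√σ‖₁`. -/
noncomputable def fid {n : Type*} [Fintype n] [DecidableEq n]
    {ρ σ : Matrix n n ℂ} (hρ : ρ.IsHermitian) (hσ : σ.IsHermitian) : ℝ :=
  traceNorm (mpow hρ (1/2) * mpow hσ (1/2))

/-- A density matrix: positive semidefinite with unit trace. -/
def IsDensity {n : Type*} [Fintype n] [DecidableEq n] (ρ : Matrix n n ℂ) : Prop :=
  ρ.PosSemidef ∧ ρ.trace = 1

section Helpers
variable {n : Type*} [Fintype n] [DecidableEq n]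

lemma trPos_nonneg (X : Matrix n n ℂ) : 0 ≤ trPos X := by
  unfold trPos
  split
  · exact Finset.sum_nonneg fun i _ => le_max_right _ _
  · exact le_refl 0

lemma isHermitian_real_smul {A : Matrix n n ℂ} (c : ℝ) (h : A.IsHermitian) :
    ((c : ℂ) • A).IsHermitian := by
  unfold Matrix.IsHermitian at *
  rw [Matrix.conjTranspose_smul, h]
  congr 1
  simp [Complex.star_def, Complex.conj_ofReal]

lemma trPos_eq_zero_of_neg {X : Matrix n n ℂ} (h : (-X).PosSemidef) : trPos X = 0 := by
  have hX : X.IsHermitian := by simpa using h.1.neg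
  rw [trPos, dif_pos hX]
  refine Finset.sum_eq_zero fun i _ => ?_
  have hle : hX.eigenvalues i ≤ 0 := by
    have hv := h.dotProduct_mulVec_nonneg ((WithLp.equiv 2 (n → ℂ)) (hX.eigenvectorBasis i))
    rw [Matrix.neg_mulVec, dotProduct_neg] at hv
    have hre := (Complex.le_def.mp hv).1
    rw [hX.eigenvalues_eq i]
    simp only [Complex.zero_re, Complex.neg_re, WithLp.equiv_apply] at hre
    simp only [RCLike.re_to_complex]
    linarith
  simp [max_eq_right hle]

lemma diag_re_nonneg {Q : Matrix n n ℂ} (hQ : Q.PosSemidef) (i : n) : 0 ≤ (Q i i).re := by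
  have h := hQ.dotProduct_mulVec_nonneg (Pi.single i 1)
  have he : dotProduct (star (Pi.single i 1)) (Q *ᵥ Pi.single i 1) = Q i i := by
    simp [dotProduct, Matrix.mulVec_single, Pi.single_apply, apply_ite (star : ℂ → ℂ)]
  rw [he] at h
  simpa using (Complex.le_def.mp h).1

lemma exists_opt {X : Matrix n n ℂ} (hX : X.IsHermitian) :
    ∃ P : Matrix n n ℂ, P.PosSemidef ∧ ((1 : Matrix n n ℂ) - P).PosSemidef ∧
      ((P * X).trace).re = trPos X := by
  classical
  set U : Matrix n n ℂ := (hX.eigenvectorUnitary : Matrix n n ℂ) with hU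
  have hUU : star U * U = 1 := Matrix.mem_unitaryGroup_iff'.mp hX.eigenvectorUnitary.2
  have hUU' : U * star U = 1 := Matrix.mem_unitaryGroup_iff.mp hX.eigenvectorUnitary.2
  set d : n → ℂ := fun i => if 0 ≤ hX.eigenvalues i then 1 else 0 with hd
  have hd0 : ∀ i, 0 ≤ d i := by
    intro i; rw [hd]; dsimp only; split
    · exact zero_le_one
    · exact le_refl 0
  have hd1 : ∀ i, 0 ≤ 1 - d i := by
    intro i; rw [hd]; dsimp only; split
    · simp
    · simp
  refine ⟨U * Matrix.diagonal d * star U, ?_, ?_, ?_⟩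
  · have := (Matrix.posSemidef_diagonal_iff.mpr hd0).mul_mul_conjTranspose_same U
    simpa [Matrix.star_eq_conjTranspose] using this
  · have heq : (1 : Matrix n n ℂ) - U * Matrix.diagonal d * star U
        = U * Matrix.diagonal (fun i => 1 - d i) * star U := by
      have : Matrix.diagonal (fun i => 1 - d i) = 1 - Matrix.diagonal d := by
        rw [← Matrix.diagonal_one, ← Matrix.diagonal_sub]
      rw [this, Matrix.mul_sub, Matrix.mul_one, Matrix.sub_mul, hUU']
    rw [heq]
    have := (Matrix.posSemidef_diagonal_iff.mpr hd1).mul_mul_conjTranspose_same U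
    simpa [Matrix.star_eq_conjTranspose] using this
  · have hPX : (U * Matrix.diagonal d * star U) * X
        = U * (Matrix.diagonal d * Matrix.diagonal (RCLike.ofReal ∘ hX.eigenvalues)) * star U := by
      conv_lhs => rw [hX.spectral_theorem, Unitary.conjStarAlgAut_apply]
      simp only [Matrix.mul_assoc]
      rw [← Matrix.mul_assoc (star U) U, hUU, Matrix.one_mul]
    rw [hPX, Matrix.trace_mul_cycle, ← Matrix.mul_assoc, hUU, Matrix.one_mul,
      Matrix.diagonal_mul_diagonal, Matrix.trace_diagonal]
    rw [trPos, dif_pos hX, Complex.re_sum]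
    refine Finset.sum_congr rfl fun i _ => ?_
    by_cases h : 0 ≤ hX.eigenvalues i
    · simp [hd, h, max_eq_left h]
    · simp [hd, h, max_eq_right (le_of_lt (not_le.mp h))]

lemma re_trace_le_trPos {X P : Matrix n n ℂ} (hX : X.IsHermitian)
    (hP : P.PosSemidef) (hP1 : ((1 : Matrix n n ℂ) - P).PosSemidef) :
    ((P * X).trace).re ≤ trPos X := by
  classical
  set U : Matrix n n ℂ := (hX.eigenvectorUnitary : Matrix n n ℂ) with hU
  have hUU : star U * U = 1 := Matrix.mem_unitaryGroup_iff'.mp hX.eigenvectorUnitary.2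
  set Q : Matrix n n ℂ := star U * P * U with hQdef
  have hQ : Q.PosSemidef := by
    have := hP.conjTranspose_mul_mul_same U
    simpa [hQdef, Matrix.star_eq_conjTranspose] using this
  have hQ1 : ((1 : Matrix n n ℂ) - Q).PosSemidef := by
    have heq : (1 : Matrix n n ℂ) - Q = star U * ((1 : Matrix n n ℂ) - P) * U := by
      rw [Matrix.mul_sub, Matrix.sub_mul, Matrix.mul_one, hUU]
    rw [heq]
    have := hP1.conjTranspose_mul_mul_same U
    simpa [Matrix.star_eq_conjTranspose] using this
  have htr : (P * X).trace = (Q * Matrix.diagonal (RCLike.ofReal ∘ hX.eigenvalues)).trace := by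
    conv_lhs => rw [hX.spectral_theorem, Unitary.conjStarAlgAut_apply]
    rw [show P * (U * Matrix.diagonal (RCLike.ofReal ∘ hX.eigenvalues) * star U)
        = (P * U) * Matrix.diagonal (RCLike.ofReal ∘ hX.eigenvalues) * star U by
      simp only [Matrix.mul_assoc]]
    rw [Matrix.trace_mul_cycle]
    simp only [← Matrix.mul_assoc]
    rw [hQdef]
  rw [htr]
  have htr2 : (Q * Matrix.diagonal (RCLike.ofReal ∘ hX.eigenvalues)).trace
      = ∑ i, Q i i * (hX.eigenvalues i : ℂ) := by
    simp [Matrix.trace, Matrix.diag, Matrix.mul_diagonal, Function.comp]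
  rw [htr2, Complex.re_sum]
  rw [trPos, dif_pos hX]
  refine Finset.sum_le_sum fun i _ => ?_
  have hq0 : 0 ≤ (Q i i).re := diag_re_nonneg hQ i
  have hq1 : (Q i i).re ≤ 1 := by
    have := diag_re_nonneg hQ1 i
    simp only [Matrix.sub_apply, Matrix.one_apply_eq, Complex.sub_re, Complex.one_re] at this
    linarith
  have hterm : (Q i i * (hX.eigenvalues i : ℂ)).re = (Q i i).re * hX.eigenvalues i := by
    simp [Complex.mul_re]
  rw [hterm]
  rcases le_or_gt 0 (hX.eigenvalues i) with h | h
  · calc (Q i i).re * hX.eigenvalues i ≤ 1 * hX.eigenvalues i :=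
        mul_le_mul_of_nonneg_right hq1 h
      _ = hX.eigenvalues i := one_mul _
      _ ≤ max (hX.eigenvalues i) 0 := le_max_left _ _
  · calc (Q i i).re * hX.eigenvalues i ≤ 0 := mul_nonpos_of_nonneg_of_nonpos hq0 h.le
      _ ≤ max (hX.eigenvalues i) 0 := le_max_right _ _

lemma trPos_smul_add_le {X Y : Matrix n n ℂ} (hX : X.IsHermitian) (hY : Y.IsHermitian)
    {a b : ℝ} (ha : 0 ≤ a) (hb : 0 ≤ b) :
    trPos ((a : ℂ) • X + (b : ℂ) • Y) ≤ a * trPos X + b * trPos Y := by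
  have hZ : ((a : ℂ) • X + (b : ℂ) • Y).IsHermitian :=
    (isHermitian_real_smul a hX).add (isHermitian_real_smul b hY)
  obtain ⟨P, hP, hP1, htr⟩ := exists_opt hZ
  rw [← htr]
  have he : (P * ((a : ℂ) • X + (b : ℂ) • Y)).trace
      = (a : ℂ) * (P * X).trace + (b : ℂ) * (P * Y).trace := by
    rw [Matrix.mul_add, Matrix.mul_smul, Matrix.mul_smul, Matrix.trace_add,
      Matrix.trace_smul, Matrix.trace_smul]
    simp [smul_eq_mul]
  rw [he]
  have h1 := re_trace_le_trPos hX hP hP1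
  have h2 := re_trace_le_trPos hY hP hP1
  simp only [Complex.add_re, Complex.re_ofReal_mul]
  have := mul_le_mul_of_nonneg_left h1 ha
  have := mul_le_mul_of_nonneg_left h2 hb
  linarith

lemma posSemidef_real_smul {A : Matrix n n ℂ} (hA : A.PosSemidef) {c : ℝ} (hc : 0 ≤ c) :
    ((c : ℂ) • A).PosSemidef := by
  refine Matrix.PosSemidef.of_dotProduct_mulVec_nonneg (isHermitian_real_smul c hA.1) fun x => ?_
  have h := hA.dotProduct_mulVec_nonneg x
  rw [Matrix.smul_mulVec, dotProduct_smul]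
  rw [Complex.le_def] at h ⊢
  constructor
  · simp only [Complex.zero_re, smul_eq_mul, Complex.re_ofReal_mul]
    exact mul_nonneg hc (by simpa using h.1)
  · simp only [Complex.zero_im, smul_eq_mul, Complex.im_ofReal_mul]
    rw [← h.2]
    simp

lemma Egamma_eq_zero {ρ σ : Matrix n n ℂ} (hσ : σ.PosSemidef) {c γ : ℝ}
    (h1 : ((c : ℂ) • σ - ρ).PosSemidef) (hγ : c ≤ γ) : Egamma γ ρ σ = 0 := by
  apply trPos_eq_zero_of_neg
  have he : -(ρ - (γ : ℂ) • σ) = ((c : ℂ) • σ - ρ) + ((γ - c : ℝ) : ℂ) • σ := by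
    push_cast
    rw [neg_sub, sub_smul]
    abel
  rw [he]
  exact h1.add (posSemidef_real_smul hσ (by linarith))

lemma Egamma_le_of_le {ρ σ : Matrix n n ℂ} (hρ : IsDensity ρ) (hσ : IsDensity σ) {c : ℝ}
    (hc : 1 < c) (h1 : ((c : ℂ) • σ - ρ).PosSemidef) {γ : ℝ} (hγ1 : 1 ≤ γ) (hγ2 : γ ≤ c) :
    Egamma γ ρ σ ≤ ((c - γ) / (c - 1)) * Egamma 1 ρ σ := by
  set l : ℝ := (c - γ) / (c - 1) with hl
  have hc1 : (0 : ℝ) < c - 1 := by linarith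
  have hl0 : 0 ≤ l := div_nonneg (by linarith) hc1.le
  have hl1 : 0 ≤ 1 - l := by
    have : l ≤ 1 := by rw [hl, div_le_one hc1]; linarith
    linarith
  have hγeq : (γ : ℂ) = (l : ℂ) + (1 - (l : ℂ)) * (c : ℂ) := by
    have hr : γ = l + (1 - l) * c := by
      rw [hl]; field_simp; ring
    have := congrArg (Complex.ofReal) hr
    push_cast at this
    exact this
  have key : ρ - (γ : ℂ) • σ
      = (l : ℂ) • (ρ - σ) + ((1 - l : ℝ) : ℂ) • (ρ - (c : ℂ) • σ) := by
    ext i j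
    simp only [Matrix.sub_apply, Matrix.add_apply, Matrix.smul_apply, smul_eq_mul]
    push_cast
    linear_combination (-(σ i j)) * hγeq
  have hXh : (ρ - σ).IsHermitian := hρ.1.1.sub hσ.1.1
  have hYh : (ρ - (c : ℂ) • σ).IsHermitian := hρ.1.1.sub (isHermitian_real_smul c hσ.1.1)
  have hzero : trPos (ρ - (c : ℂ) • σ) = 0 :=
    trPos_eq_zero_of_neg (by rw [neg_sub]; exact h1)
  have hbound := trPos_smul_add_le hXh hYh hl0 hl1
  have hE1 : Egamma 1 ρ σ = trPos (ρ - σ) := by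
    rw [Egamma, Complex.ofReal_one, one_smul]
  rw [Egamma, key, hE1]
  calc trPos ((l : ℂ) • (ρ - σ) + ((1 - l : ℝ) : ℂ) • (ρ - (c : ℂ) • σ))
      ≤ l * trPos (ρ - σ) + (1 - l) * trPos (ρ - (c : ℂ) • σ) := hbound
    _ = l * trPos (ρ - σ) := by rw [hzero]; ring

lemma Egamma_one_symm {ρ σ : Matrix n n ℂ} (hρ : IsDensity ρ) (hσ : IsDensity σ) :
    Egamma 1 σ ρ = Egamma 1 ρ σ := by
  have key : ∀ (A B : Matrix n n ℂ), IsDensity A → IsDensity B →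
      trPos (B - A) ≤ trPos (A - B) := by
    intro A B hA hB
    obtain ⟨P, hP, hP1, htr⟩ := exists_opt (hB.1.1.sub hA.1.1)
    rw [← htr]
    have he : (P * (B - A)).trace = (((1 : Matrix n n ℂ) - P) * (A - B)).trace := by
      simp only [Matrix.mul_sub, Matrix.sub_mul, Matrix.one_mul, Matrix.trace_sub, hA.2, hB.2]
      ring
    rw [he]
    exact re_trace_le_trPos (hA.1.1.sub hB.1.1) hP1 (by rw [sub_sub_cancel]; exact hP)
  simp only [Egamma, Complex.ofReal_one, one_smul]
  exact le_antisymm (key ρ σ hρ hσ) (key σ ρ hσ hρ)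

end Helpers

open MeasureTheory in
/-- If `ρ ≤ e^ε σ` and `σ ≤ e^ε ρ` (i.e. `D_∞(ρ‖σ) ≤ ε` and `D_∞(σ‖ρ) ≤ ε`), then
`E_γ(ρ‖σ) ≤ ((e^ε-γ)/(e^ε-1))·E₁(ρ‖σ)` for all `γ ∈ [1, e^ε]`, and consequently
`H_{1/2}(ρ‖σ) = (1/2)∫₁^∞ γ^{-3/2}(E_γ(ρ‖σ)+E_γ(σ‖ρ)) dγ
  ≤ 2·((e^{ε/2}-1)²/(e^ε-1))·E₁(ρ‖σ)`. -/
theorem stmt_19 {n : Type*} [Fintype n] [DecidableEq n] (ρ σ : Matrix n n ℂ)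
    (hρ : IsDensity ρ) (hσ : IsDensity σ) (ε : ℝ) (hε : 0 < ε)
    (h1 : (((Real.exp ε : ℝ) : ℂ) • σ - ρ).PosSemidef)
    (h2 : (((Real.exp ε : ℝ) : ℂ) • ρ - σ).PosSemidef) :
    (∀ γ ∈ Set.Icc (1 : ℝ) (Real.exp ε),
        Egamma γ ρ σ ≤ ((Real.exp ε - γ) / (Real.exp ε - 1)) * Egamma 1 ρ σ) ∧
      (1/2) * (∫ γ in Set.Ioi (1:ℝ),
          γ ^ (-(3:ℝ)/2) * (Egamma γ ρ σ + Egamma γ σ ρ)) ≤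
        2 * ((Real.exp (ε/2) - 1)^2 / (Real.exp ε - 1)) * Egamma 1 ρ σ := by
  have hc : 1 < Real.exp ε := by
    calc (1:ℝ) = Real.exp 0 := Real.exp_zero.symm
      _ < Real.exp ε := Real.exp_lt_exp.mpr hε
  set c : ℝ := Real.exp ε with hcdef
  have hc1 : (0:ℝ) < c - 1 := by linarith
  have partA : ∀ γ ∈ Set.Icc (1:ℝ) c,
      Egamma γ ρ σ ≤ ((c - γ)/(c-1)) * Egamma 1 ρ σ :=
    fun γ hγ => Egamma_le_of_le hρ hσ hc h1 hγ.1 hγ.2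
  refine ⟨partA, ?_⟩
  have partA' : ∀ γ ∈ Set.Icc (1:ℝ) c,
      Egamma γ σ ρ ≤ ((c - γ)/(c-1)) * Egamma 1 ρ σ := by
    intro γ hγ
    have h := Egamma_le_of_le hσ hρ hc h2 hγ.1 hγ.2
    rwa [Egamma_one_symm hρ hσ] at h
  set E : ℝ := Egamma 1 ρ σ with hE
  have hE0 : 0 ≤ E := trPos_nonneg _
  set K : ℝ := 2 * E / (c - 1) with hK
  have hK0 : 0 ≤ K := by positivity
  set g : ℝ → ℝ :=
    (Set.Ioc (1:ℝ) c).indicator (fun γ => K * (γ ^ (-(3:ℝ)/2) * (c - γ))) with hg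
  -- integrability of g
  have hcont : ContinuousOn (fun γ : ℝ => K * (γ ^ (-(3:ℝ)/2) * (c - γ))) (Set.Icc 1 c) := by
    refine continuousOn_const.mul (ContinuousOn.mul ?_ (continuousOn_const.sub continuousOn_id))
    refine ContinuousOn.rpow_const continuousOn_id fun x hx => Or.inl ?_
    have : (1:ℝ) ≤ x := hx.1
    intro h0; rw [h0] at this; linarith
  have hint : IntegrableOn (fun γ : ℝ => K * (γ ^ (-(3:ℝ)/2) * (c - γ))) (Set.Ioc 1 c) :=
    (hcont.integrableOn_Icc).mono_set Set.Ioc_subset_Icc_self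
  have hgi : Integrable g (volume.restrict (Set.Ioi (1:ℝ))) := by
    rw [hg]
    exact (hint.integrable_indicator measurableSet_Ioc).restrict
  have hf0 : 0 ≤ᵐ[volume.restrict (Set.Ioi (1:ℝ))]
      fun γ => γ ^ (-(3:ℝ)/2) * (Egamma γ ρ σ + Egamma γ σ ρ) := by
    refine (ae_restrict_iff' measurableSet_Ioi).2 (Filter.Eventually.of_forall ?_)
    intro γ hγ
    have hγ0 : (0:ℝ) < γ := lt_trans one_pos hγ
    have e1 := trPos_nonneg (ρ - (γ:ℂ) • σ)
    have e2 := trPos_nonneg (σ - (γ:ℂ) • ρ)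
    have : 0 ≤ Egamma γ ρ σ + Egamma γ σ ρ := by
      simp only [Egamma]; linarith
    exact mul_nonneg (Real.rpow_nonneg hγ0.le _) this
  have hfg : (fun γ => γ ^ (-(3:ℝ)/2) * (Egamma γ ρ σ + Egamma γ σ ρ))
      ≤ᵐ[volume.restrict (Set.Ioi (1:ℝ))] g := by
    refine (ae_restrict_iff' measurableSet_Ioi).2 (Filter.Eventually.of_forall ?_)
    intro γ hγ
    have hγ1 : (1:ℝ) < γ := hγ
    have hγ0 : (0:ℝ) < γ := lt_trans one_pos hγ1
    have hrp : 0 ≤ γ ^ (-(3:ℝ)/2) := Real.rpow_nonneg hγ0.le _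
    rcases le_or_gt γ c with h | h
    · have hmem : γ ∈ Set.Ioc (1:ℝ) c := ⟨hγ1, h⟩
      rw [hg, Set.indicator_of_mem hmem]
      have b1 := partA γ ⟨hγ1.le, h⟩
      have b2 := partA' γ ⟨hγ1.le, h⟩
      have hsum : Egamma γ ρ σ + Egamma γ σ ρ ≤ 2 * ((c - γ)/(c-1)) * E := by linarith
      calc γ ^ (-(3:ℝ)/2) * (Egamma γ ρ σ + Egamma γ σ ρ)
          ≤ γ ^ (-(3:ℝ)/2) * (2 * ((c - γ)/(c-1)) * E) :=
            mul_le_mul_of_nonneg_left hsum hrp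
        _ = K * (γ ^ (-(3:ℝ)/2) * (c - γ)) := by
            rw [hK]; field_simp
    · rw [hg, Set.indicator_of_notMem (fun hmem => absurd hmem.2 (not_le.mpr h))]
      have z1 : Egamma γ ρ σ = 0 := Egamma_eq_zero hσ.1 h1 h.le
      have z2 : Egamma γ σ ρ = 0 := Egamma_eq_zero hρ.1 h2 h.le
      simp [z1, z2]
  have hle := integral_mono_of_nonneg hf0 hgi hfg
  -- compute the integral of g
  have hFTC : ∫ γ in (1:ℝ)..c, γ ^ (-(3:ℝ)/2) * (c - γ) = 2 * (c ^ ((1:ℝ)/2) - 1)^2 := by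
    have hderiv : ∀ γ ∈ Set.uIcc (1:ℝ) c,
        HasDerivAt (fun x : ℝ => (-(2*c)) * x ^ (-(1:ℝ)/2) + (-2) * x ^ ((1:ℝ)/2))
          (γ ^ (-(3:ℝ)/2) * (c - γ)) γ := by
      intro γ hγ
      rw [Set.uIcc_of_le hc.le] at hγ
      have hγ0 : (0:ℝ) < γ := lt_of_lt_of_le one_pos hγ.1
      have d1 : HasDerivAt (fun x:ℝ => x ^ (-(1:ℝ)/2)) ((-(1:ℝ)/2) * γ ^ (-(1:ℝ)/2 - 1)) γ :=
        Real.hasDerivAt_rpow_const (Or.inl hγ0.ne')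
      have d2 : HasDerivAt (fun x:ℝ => x ^ ((1:ℝ)/2)) (((1:ℝ)/2) * γ ^ ((1:ℝ)/2 - 1)) γ :=
        Real.hasDerivAt_rpow_const (Or.inl hγ0.ne')
      have hD := (d1.const_mul (-(2*c))).add (d2.const_mul (-2))
      refine hD.congr_deriv ?_
      have e1 : -(1:ℝ)/2 - 1 = -(3:ℝ)/2 := by norm_num
      have e2 : (1:ℝ)/2 - 1 = -(1:ℝ)/2 := by norm_num
      rw [e1, e2]
      have e3 : γ ^ (-(1:ℝ)/2) = γ ^ (-(3:ℝ)/2) * γ := by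
        nth_rewrite 3 [← Real.rpow_one γ]
        rw [← Real.rpow_add hγ0]
        norm_num
      rw [e3]; ring
    have hicont : ContinuousOn (fun γ:ℝ => γ ^ (-(3:ℝ)/2) * (c - γ)) (Set.uIcc 1 c) := by
      refine ContinuousOn.mul ?_ (continuousOn_const.sub continuousOn_id)
      refine ContinuousOn.rpow_const continuousOn_id fun x hx => Or.inl ?_
      rw [Set.uIcc_of_le hc.le] at hx
      have : (1:ℝ) ≤ x := hx.1
      intro h0; rw [h0] at this; linarith
    rw [intervalIntegral.integral_eq_sub_of_hasDerivAt hderiv hicont.intervalIntegrable]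
    rw [Real.one_rpow, Real.one_rpow]
    have hcpos : (0:ℝ) < c := lt_trans one_pos hc
    have hs : c ^ ((1:ℝ)/2) * c ^ ((1:ℝ)/2) = c := by
      rw [← Real.rpow_add hcpos]; norm_num
    have hinv : c * c ^ (-(1:ℝ)/2) = c ^ ((1:ℝ)/2) := by
      nth_rewrite 1 [← Real.rpow_one c]
      rw [← Real.rpow_add hcpos]; norm_num
    nlinarith [hs, hinv]
  have hgint : ∫ γ in Set.Ioi (1:ℝ), g γ = K * (2 * (c ^ ((1:ℝ)/2) - 1)^2) := by
    rw [hg, integral_indicator measurableSet_Ioc, Measure.restrict_restrict measurableSet_Ioc,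
      Set.inter_eq_self_of_subset_left Set.Ioc_subset_Ioi_self,
      ← intervalIntegral.integral_of_le hc.le, intervalIntegral.integral_const_mul, hFTC]
  have hsqrt : c ^ ((1:ℝ)/2) = Real.exp (ε/2) := by
    rw [hcdef, Real.rpow_def_of_pos (Real.exp_pos ε), Real.log_exp]
    ring_nf
  rw [hgint, hsqrt] at hle
  calc (1/2) * (∫ γ in Set.Ioi (1:ℝ), γ ^ (-(3:ℝ)/2) * (Egamma γ ρ σ + Egamma γ σ ρ))
      ≤ (1/2) * (K * (2 * (Real.exp (ε/2) - 1)^2)) := by linarith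
    _ = 2 * ((Real.exp (ε/2) - 1)^2 / (c - 1)) * E := by
        rw [hK]; field_simp
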